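/- For every real a ≥ 0 and every integer j ≥ 1, Φ(a√(j+1)) − Φ(a√j) ≤ (1/√(2π)) ∫ from √(j·ln((j+1)/j)) to √((j+1)·ln((j+1)/j)) of e^{−t²/2} dt. Moreover, the bound is attained at a = √(ln((j+1)/j)). -/

import Mathlib

open MeasureTheory ProbabilityTheory Real

/-- The standard normal cumulative distribution function
`Φ(x) = (1/√(2π)) ∫_{-∞}^{x} e^{-t²/2} dt`. -/
noncomputable def stdGaussianCDF (x : ℝ) : ℝ :=
  (Real.sqrt (2 * Real.pi))⁻¹ * ∫ t in Set.Iic x, Real.exp (-t ^ 2 / 2)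

theorem stmt5 (a : ℝ) (ha : 0 ≤ a) (j : ℕ) (hj : 1 ≤ j) :
    stdGaussianCDF (a * Real.sqrt ((j : ℝ) + 1)) - stdGaussianCDF (a * Real.sqrt j)
      ≤ (Real.sqrt (2 * Real.pi))⁻¹
        * ∫ t in Real.sqrt ((j : ℝ) * Real.log (((j : ℝ) + 1) / j))..
            Real.sqrt (((j : ℝ) + 1) * Real.log (((j : ℝ) + 1) / j)),
            Real.exp (-t ^ 2 / 2)
      ∧ (let a₀ := Real.sqrt (Real.log (((j : ℝ) + 1) / j));
          stdGaussianCDF (a₀ * Real.sqrt ((j : ℝ) + 1)) - stdGaussianCDF (a₀ * Real.sqrt j)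
            = (Real.sqrt (2 * Real.pi))⁻¹
              * ∫ t in Real.sqrt ((j : ℝ) * Real.log (((j : ℝ) + 1) / j))..
                  Real.sqrt (((j : ℝ) + 1) * Real.log (((j : ℝ) + 1) / j)),
                  Real.exp (-t ^ 2 / 2)) := by
  have hj1 : (1:ℝ) ≤ (j:ℝ) := by exact_mod_cast hj
  set J : ℝ := (j:ℝ) with hJdef
  have hJ : 0 < J := lt_of_lt_of_le one_pos hj1
  have hJ1 : 0 < J + 1 := by linarith
  set L : ℝ := Real.log ((J+1)/J) with hLdef
  have hL : 0 < L := Real.log_pos (by rw [lt_div_iff₀ hJ]; linarith)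
  set f : ℝ → ℝ := fun t => Real.exp (-t ^ 2 / 2) with hfdef
  have hfc : Continuous f := by
    rw [hfdef]; continuity
  have hfi : Integrable f := by
    have heq : f = fun x : ℝ => Real.exp (-2⁻¹ * x ^ 2) := by
      rw [hfdef]; funext x; congr 1; ring
    rw [heq]; exact integrable_exp_neg_mul_sq (by norm_num)
  have hcdf : ∀ x y : ℝ, stdGaussianCDF y - stdGaussianCDF x
      = (Real.sqrt (2 * Real.pi))⁻¹ * ∫ t in x..y, f t := by
    intro x y
    unfold stdGaussianCDF
    rw [← mul_sub, intervalIntegral.integral_Iic_sub_Iic hfi.integrableOn hfi.integrableOn]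
  set b : ℝ := Real.sqrt J with hbdef
  set b' : ℝ := Real.sqrt (J+1) with hb'def
  set a₀ : ℝ := Real.sqrt L with ha₀def
  have hb : 0 < b := Real.sqrt_pos.2 hJ
  have hb' : 0 < b' := Real.sqrt_pos.2 hJ1
  have ha₀ : 0 < a₀ := Real.sqrt_pos.2 hL
  have hbsq : b ^ 2 = J := Real.sq_sqrt hJ.le
  have hb'sq : b' ^ 2 = J + 1 := Real.sq_sqrt hJ1.le
  have ha₀sq : a₀ ^ 2 = L := Real.sq_sqrt hL.le
  -- endpoints
  have he1 : a₀ * b = Real.sqrt (J * L) := by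
    rw [ha₀def, hbdef, ← Real.sqrt_mul hL.le, mul_comm]
  have he2 : a₀ * b' = Real.sqrt ((J+1) * L) := by
    rw [ha₀def, hb'def, ← Real.sqrt_mul hL.le, mul_comm]
  -- the function φ
  set φ : ℝ → ℝ := fun x => ∫ t in (x*b)..(x*b'), f t with hφdef
  have hsplit : φ = fun x => (∫ t in (0:ℝ)..(x*b'), f t) - (∫ t in (0:ℝ)..(x*b), f t) := by
    funext x
    rw [intervalIntegral.integral_interval_sub_left (hfc.intervalIntegrable _ _)
      (hfc.intervalIntegrable _ _)]
  have hderiv : ∀ x : ℝ, HasDerivAt φ (b' * f (x*b') - b * f (x*b)) x := by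
    intro x
    have h1 : ∀ c : ℝ, HasDerivAt (fun x : ℝ => ∫ t in (0:ℝ)..(x*c), f t) (c * f (x*c)) x := by
      intro c
      have hFTC : HasDerivAt (fun u => ∫ t in (0:ℝ)..u, f t) (f (x*c)) (x*c) :=
        intervalIntegral.integral_hasDerivAt_right (hfc.intervalIntegrable _ _)
          (hfc.stronglyMeasurableAtFilter _ _) hfc.continuousAt
      have := hFTC.comp x (hasDerivAt_mul_const c)
      simpa [mul_comm, Function.comp_def] using this
    rw [hsplit]
    exact (h1 b').sub (h1 b)
  -- the key factorization of the derivative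
  have hD : ∀ x : ℝ, b' * f (x*b') - b * f (x*b)
      = Real.exp (-(x^2*J)/2) * (b' * Real.exp (-x^2/2) - b) := by
    intro x
    have h1 : f (x*b') = Real.exp (-(x^2*J)/2) * Real.exp (-x^2/2) := by
      rw [hfdef, ← Real.exp_add]
      show Real.exp (-(x*b')^2/2) = _
      rw [mul_pow, hb'sq]
      congr 1; ring
    have h2 : f (x*b) = Real.exp (-(x^2*J)/2) := by
      rw [hfdef]
      show Real.exp (-(x*b)^2/2) = _
      rw [mul_pow, hbsq]
    rw [h1, h2]; ring
  have hkey : b' * Real.exp (-L/2) = b := by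
    have h1 : Real.exp (-L/2) = Real.sqrt (J/(J+1)) := by
      rw [Real.exp_half, Real.exp_neg, Real.exp_log (div_pos hJ1 hJ), inv_div]
    rw [h1, hb'def, hbdef, ← Real.sqrt_mul hJ1.le]
    congr 1
    field_simp
  -- sign of the derivative
  have hDpos : ∀ x : ℝ, x^2 ≤ L → 0 ≤ b' * f (x*b') - b * f (x*b) := by
    intro x hx
    rw [hD]
    apply mul_nonneg (Real.exp_nonneg _)
    have : Real.exp (-L/2) ≤ Real.exp (-x^2/2) := Real.exp_le_exp.2 (by linarith)
    nlinarith [hb'.le]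
  have hDneg : ∀ x : ℝ, L ≤ x^2 → b' * f (x*b') - b * f (x*b) ≤ 0 := by
    intro x hx
    rw [hD]
    apply mul_nonpos_of_nonneg_of_nonpos (Real.exp_nonneg _)
    have : Real.exp (-x^2/2) ≤ Real.exp (-L/2) := Real.exp_le_exp.2 (by linarith)
    nlinarith [hb'.le]
  -- main monotonicity inequality: φ a ≤ φ a₀
  have hmain : φ a ≤ φ a₀ := by
    rcases le_total a a₀ with hle | hle
    · have hmono : MonotoneOn φ (Set.Icc a a₀) := by
        apply monotoneOn_of_deriv_nonneg (convex_Icc a a₀)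
          (fun x _ => (hderiv x).continuousAt.continuousWithinAt)
          (fun x _ => ((hderiv x).differentiableAt.differentiableWithinAt))
        intro x hx
        rw [interior_Icc] at hx
        rw [(hderiv x).deriv]
        apply hDpos
        have hx0 : 0 ≤ x := le_trans ha hx.1.le
        calc x^2 ≤ a₀^2 := by nlinarith [hx.2.le]
        _ = L := ha₀sq
      exact hmono ⟨le_refl a, hle⟩ ⟨hle, le_refl a₀⟩ hle
    · have hanti : AntitoneOn φ (Set.Icc a₀ a) := by
        apply antitoneOn_of_deriv_nonpos (convex_Icc a₀ a)
          (fun x _ => (hderiv x).continuousAt.continuousWithinAt)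
          (fun x _ => ((hderiv x).differentiableAt.differentiableWithinAt))
        intro x hx
        rw [interior_Icc] at hx
        rw [(hderiv x).deriv]
        apply hDneg
        calc L = a₀^2 := ha₀sq.symm
        _ ≤ x^2 := by nlinarith [ha₀.le, hx.1.le]
      exact hanti ⟨le_refl a₀, hle⟩ ⟨hle, le_refl a⟩ hle
  have hc : (0:ℝ) ≤ (Real.sqrt (2 * Real.pi))⁻¹ := inv_nonneg.2 (Real.sqrt_nonneg _)
  constructor
  · rw [hcdf]
    rw [← he1, ← he2]
    exact mul_le_mul_of_nonneg_left hmain hc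
  · dsimp only
    rw [hcdf]
    rw [← he1, ← he2]
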